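/- Let n ≥ 4 be an integer such that C(n,2) is even. Then N_prod(n, 2, n−2, 1) = (C(n,2)/2)². -/

import Mathlib

open Finset

/-- The ground set `[n] = {1,…,n}`. -/
def gs (n : ℕ) : Finset ℕ := Finset.Icc 1 n

/-- `F` is an `m`-uniform family of subsets of `[n]`. -/
def UniformOn (n m : ℕ) (F : Finset (Finset ℕ)) : Prop :=
  ∀ A ∈ F, A ⊆ gs n ∧ A.card = m

/-- `F` and `G` are cross-`t`-intersecting. -/
def CrossInt (t : ℕ) (F G : Finset (Finset ℕ)) : Prop :=
  ∀ A ∈ F, ∀ B ∈ G, t ≤ (A ∩ B).card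

/-- The maximum of `|F| ⬝ |G|` over cross-`t`-intersecting pairs where `F` is an
`a`-uniform family and `G` a `b`-uniform family of subsets of `[n]`. -/
noncomputable def NProd (n a b t : ℕ) : ℕ :=
  sSup {x : ℕ | ∃ F G : Finset (Finset ℕ),
    UniformOn n a F ∧ UniformOn n b G ∧ CrossInt t F G ∧ x = F.card * G.card}

lemma gs_card (n : ℕ) : (gs n).card = n := by simp [gs]

/-- the exact value of `N_prod(n, 2, n−2, 1)` when `C(n,2)` is even. -/
theorem nprod_two_complement (n : ℕ) (hn : 4 ≤ n) (heven : 2 ∣ n.choose 2) :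
    NProd n 2 (n - 2) 1 = (n.choose 2 / 2) ^ 2 := by
  set m := n.choose 2 with hm
  set k := m / 2 with hk
  have hmk : m = 2 * k := by
    have := Nat.div_mul_cancel heven
    omega
  set P := Finset.powersetCard 2 (gs n) with hPdef
  have hP : P.card = m := by
    rw [hPdef, Finset.card_powersetCard, gs_card]
  -- the set we take sSup of
  set S := {x : ℕ | ∃ F G : Finset (Finset ℕ),
    UniformOn n 2 F ∧ UniformOn n (n - 2) G ∧ CrossInt 1 F G ∧ x = F.card * G.card} with hS
  -- upper bound
  have hub : ∀ x ∈ S, x ≤ k ^ 2 := by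
    rintro x ⟨F, G, hF, hG, hFG, rfl⟩
    set G' := G.image (fun B => gs n \ B) with hG'
    have hG'card : G'.card = G.card := by
      apply Finset.card_image_of_injOn
      intro B1 h1 B2 h2 h
      have e1 : gs n \ (gs n \ B1) = B1 := Finset.sdiff_sdiff_eq_self (hG B1 h1).1
      have e2 : gs n \ (gs n \ B2) = B2 := Finset.sdiff_sdiff_eq_self (hG B2 h2).1
      rw [← e1, ← e2]
      exact congrArg (fun s => gs n \ s) h
    have hdisj : Disjoint F G' := by
      rw [Finset.disjoint_left]
      intro A hA hA'
      obtain ⟨B, hB, rfl⟩ := Finset.mem_image.mp hA'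
      have := hFG _ hA B hB
      simp [Finset.sdiff_inter_self] at this
    have hsub : F ∪ G' ⊆ P := by
      intro A hA
      rcases Finset.mem_union.mp hA with h | h
      · exact Finset.mem_powersetCard.mpr ⟨(hF A h).1, (hF A h).2⟩
      · obtain ⟨B, hB, rfl⟩ := Finset.mem_image.mp h
        refine Finset.mem_powersetCard.mpr ⟨Finset.sdiff_subset, ?_⟩
        rw [Finset.card_sdiff_of_subset (hG B hB).1, gs_card, (hG B hB).2]
        omega
    have hcard : F.card + G.card ≤ 2 * k := by
      have := Finset.card_le_card hsub
      rw [Finset.card_union_of_disjoint hdisj, hG'card] at this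
      omega
    have : (F.card : ℤ) * G.card ≤ (k : ℤ) ^ 2 := by
      have h1 : (F.card : ℤ) + G.card ≤ 2 * k := by exact_mod_cast hcard
      nlinarith [sq_nonneg ((F.card : ℤ) - G.card), sq_nonneg ((F.card : ℤ) + G.card)]
    exact_mod_cast this
  -- membership
  have hmem : k ^ 2 ∈ S := by
    obtain ⟨F, hFsub, hFcard⟩ := Finset.exists_subset_card_eq (show k ≤ P.card by omega)
    refine ⟨F, (P \ F).image (fun A => gs n \ A), ?_, ?_, ?_, ?_⟩
    · intro A hA
      exact Finset.mem_powersetCard.mp (hFsub hA)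
    · intro B hB
      obtain ⟨A, hA, rfl⟩ := Finset.mem_image.mp hB
      have hA' := Finset.mem_powersetCard.mp (Finset.mem_sdiff.mp hA).1
      refine ⟨Finset.sdiff_subset, ?_⟩
      rw [Finset.card_sdiff_of_subset hA'.1, gs_card, hA'.2]
    · intro A hA B hB
      obtain ⟨A', hA', rfl⟩ := Finset.mem_image.mp hB
      have hAP := Finset.mem_powersetCard.mp (hFsub hA)
      have hA'P := Finset.mem_powersetCard.mp (Finset.mem_sdiff.mp hA').1
      have hne : A ≠ A' := by
        rintro rfl
        exact (Finset.mem_sdiff.mp hA').2 hA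
      have heq : A ∩ (gs n \ A') = A \ A' := by
        ext x
        simp only [Finset.mem_inter, Finset.mem_sdiff]
        tauto
      rw [heq]
      rw [Nat.succ_le_iff, Finset.card_pos]
      by_contra h
      rw [Finset.not_nonempty_iff_eq_empty, Finset.sdiff_eq_empty_iff_subset] at h
      exact hne (Finset.eq_of_subset_of_card_le h (by rw [hAP.2, hA'P.2]))
    · have hinj : Set.InjOn (fun A => gs n \ A) ↑(P \ F) := by
        intro B1 h1 B2 h2 h
        have s1 : B1 ⊆ gs n := (Finset.mem_powersetCard.mp
          (Finset.mem_sdiff.mp (Finset.mem_coe.mp h1)).1).1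
        have s2 : B2 ⊆ gs n := (Finset.mem_powersetCard.mp
          (Finset.mem_sdiff.mp (Finset.mem_coe.mp h2)).1).1
        have e1 : gs n \ (gs n \ B1) = B1 := Finset.sdiff_sdiff_eq_self s1
        have e2 : gs n \ (gs n \ B2) = B2 := Finset.sdiff_sdiff_eq_self s2
        rw [← e1, ← e2]
        exact congrArg (fun s => gs n \ s) h
      rw [Finset.card_image_of_injOn hinj, Finset.card_sdiff_of_subset hFsub, hP, hFcard]
      have : m - k = k := by omega
      rw [this]
      ring
  -- conclude
  have : NProd n 2 (n - 2) 1 = sSup S := by rw [NProd, ← hS]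
  rw [this]
  exact le_antisymm (csSup_le ⟨_, hmem⟩ hub) (le_csSup ⟨k ^ 2, hub⟩ hmem)
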